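/- (Generating function for the Specialized Chihara polynomials.) Let μ > 0 and γ, λ, z ∈ ℝ. Then the series Σ_{n=0}^{∞} P_n(λ;μ,γ)·z^n/√([n]_μ!) converges absolutely and equals e^{−z²/2}·( ₀F₁(; μ+1/2; z²(λ²−γ²)/4) + (z(λ−γ)/(2μ+1))·₀F₁(; μ+3/2; z²(λ²−γ²)/4) ), where ₀F₁(; b; x) = Σ_{k=0}^{∞} x^k/((b)_k k!). -/

import Mathlib

noncomputable section

open Real MeasureTheory

namespace MinusOne

/-- The μ-number `[n]_μ = n + (1 - (-1)^n) μ`. -/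
def munum (μ : ℝ) (n : ℕ) : ℝ := n + (1 - (-1 : ℝ) ^ n) * μ

/-- The μ-factorial `[n]_μ! = [1]_μ [2]_μ ⋯ [n]_μ`. -/
def mufact (μ : ℝ) (n : ℕ) : ℝ := ∏ k ∈ Finset.range n, munum μ (k + 1)

/-- Pochhammer symbol `(a)_k = a (a+1) ⋯ (a+k-1)`. -/
def poch (a : ℝ) (k : ℕ) : ℝ := ∏ i ∈ Finset.range k, (a + i)

/-- Laguerre polynomial `L_n^{(α)}(x)`. -/
def laguerre (α : ℝ) (n : ℕ) (x : ℝ) : ℝ :=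
  (poch (α + 1) n / (Nat.factorial n : ℝ)) *
    ∑ k ∈ Finset.range (n + 1),
      poch (-(n : ℝ)) k / (poch (α + 1) k * (Nat.factorial k : ℝ)) * x ^ k

/-- Specialized Chihara polynomials `P_n(x; μ, γ)`. -/
def P (μ γ : ℝ) (n : ℕ) (x : ℝ) : ℝ :=
  if n % 2 = 0 then
    (-1 : ℝ) ^ (n / 2) *
      Real.sqrt ((Nat.factorial (n / 2) : ℝ) * Real.Gamma (μ + 1/2) /
        Real.Gamma (((n / 2 : ℕ) : ℝ) + μ + 1/2)) *
      laguerre (μ - 1/2) (n / 2) ((x ^ 2 - γ ^ 2) / 2)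
  else
    (-1 : ℝ) ^ (n / 2) *
      Real.sqrt ((Nat.factorial (n / 2) : ℝ) * Real.Gamma (μ + 3/2) /
        Real.Gamma (((n / 2 : ℕ) : ℝ) + μ + 3/2)) *
      ((x - γ) / Real.sqrt (2 * μ + 1)) *
      laguerre (μ + 1/2) (n / 2) ((x ^ 2 - γ ^ 2) / 2)

/-- Chihara weight function `w(x; μ, γ)`. -/
def w (μ γ : ℝ) (x : ℝ) : ℝ :=
  Real.sign x * (x + γ) * ((x ^ 2 - γ ^ 2) / 2) ^ (μ - 1/2) *
    Real.exp (-((x ^ 2 - γ ^ 2) / 2))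

/-- The set `F(γ) = (-∞, -|γ|) ∪ (|γ|, ∞)`. -/
def Fset (γ : ℝ) : Set ℝ := Set.Iio (-|γ|) ∪ Set.Ioi (|γ|)

/-- Normalized Chihara weight `W = w / (2 Γ(μ+1/2))`. -/
def Wn (μ γ : ℝ) (x : ℝ) : ℝ := w μ γ x / (2 * Real.Gamma (μ + 1/2))

/-- The measure `W(x; μ, γ) dx` on `F(γ)`. -/
def meas1 (μ γ : ℝ) : Measure ℝ :=
  (volume.restrict (Fset γ)).withDensity fun x => ENNReal.ofReal (Wn μ γ x)

/-- The region `G = {|λ2| > |λ1| > |c|}`. -/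
def Gset (c : ℝ) : Set (ℝ × ℝ) := {p : ℝ × ℝ | |c| < |p.1| ∧ |p.1| < |p.2|}

/-- The measure `W(λ1; μ1, c ε1) W(λ2; μ2, λ1 ε2) dλ1 dλ2` on `G`. -/
def meas2 (μ1 μ2 c ε1 ε2 : ℝ) : Measure (ℝ × ℝ) :=
  ((volume : Measure (ℝ × ℝ)).restrict (Gset c)).withDensity
    fun p => ENNReal.ofReal (Wn μ1 (c * ε1) p.1 * Wn μ2 (p.1 * ε2) p.2)

/-- The region `G⁽³⁾ = {|λ3| > |λ2| > |λ1| > |c|}`. -/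
def G3set (c : ℝ) : Set (ℝ × ℝ × ℝ) :=
  {p : ℝ × ℝ × ℝ | |c| < |p.1| ∧ |p.1| < |p.2.1| ∧ |p.2.1| < |p.2.2|}

/-- The three-variable measure on `G⁽³⁾`. -/
def meas3 (μ1 μ2 μ3 c ε1 ε2 ε3 : ℝ) : Measure (ℝ × ℝ × ℝ) :=
  ((volume : Measure (ℝ × ℝ × ℝ)).restrict (G3set c)).withDensity
    fun p => ENNReal.ofReal
      (Wn μ1 (c * ε1) p.1 * Wn μ2 (p.1 * ε2) p.2.1 * Wn μ3 (p.2.1 * ε3) p.2.2)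

/-- Big −1 Jacobi polynomials `J_n(x; a, b, c)`. -/
def J (a b c : ℝ) (n : ℕ) (x : ℝ) : ℝ :=
  if n % 2 = 0 then
    (∑ k ∈ Finset.range (n + 1),
       poch (-(n : ℝ) / 2) k * poch (((n : ℝ) + a + b + 2) / 2) k /
         (poch ((a + 1) / 2) k * (Nat.factorial k : ℝ)) * ((1 - x ^ 2) / (1 - c ^ 2)) ^ k)
    + ((n : ℝ) * (1 - x) / ((1 + c) * (a + 1))) *
      ∑ k ∈ Finset.range (n + 1),
        poch (1 - (n : ℝ) / 2) k * poch (((n : ℝ) + a + b + 2) / 2) k /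
          (poch ((a + 3) / 2) k * (Nat.factorial k : ℝ)) * ((1 - x ^ 2) / (1 - c ^ 2)) ^ k
  else
    (∑ k ∈ Finset.range (n + 1),
       poch (-((n : ℝ) - 1) / 2) k * poch (((n : ℝ) + a + b + 1) / 2) k /
         (poch ((a + 1) / 2) k * (Nat.factorial k : ℝ)) * ((1 - x ^ 2) / (1 - c ^ 2)) ^ k)
    - (((n : ℝ) + a + b + 1) * (1 - x) / ((1 + c) * (a + 1))) *
      ∑ k ∈ Finset.range (n + 1),
        poch (-((n : ℝ) - 1) / 2) k * poch (((n : ℝ) + a + b + 3) / 2) k /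
          (poch ((a + 3) / 2) k * (Nat.factorial k : ℝ)) * ((1 - x ^ 2) / (1 - c ^ 2)) ^ k

/-- Recurrence coefficient `A_n` for the Big −1 Jacobi polynomials. -/
def JA (a b c : ℝ) (n : ℕ) : ℝ :=
  if n % 2 = 0 then ((n : ℝ) + a + 1) * (c + 1) / (2 * n + a + b + 2)
  else (1 - c) * ((n : ℝ) + a + b + 1) / (2 * n + a + b + 2)

/-- Recurrence coefficient `C_n` for the Big −1 Jacobi polynomials. -/
def JC (a b c : ℝ) (n : ℕ) : ℝ :=
  if n % 2 = 0 then (n : ℝ) * (1 - c) / (2 * n + a + b)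
  else ((n : ℝ) + b) * (1 + c) / (2 * n + a + b)

/-- Big −1 Jacobi weight `ω(x; a, b, c)`. -/
def Jweight (a b c : ℝ) (x : ℝ) : ℝ :=
  Real.sign x * (1 + x) * (x - c) * (x ^ 2 - c ^ 2) ^ ((b - 1) / 2) *
    (1 - x ^ 2) ^ ((a - 1) / 2)

/-- Big −1 Jacobi normalization `h_n(a, b)`. -/
def hJ (a b : ℝ) (n : ℕ) : ℝ :=
  if n % 2 = 0 then
    2 * Real.Gamma (((n : ℝ) + b + 1) / 2) * Real.Gamma (((n : ℝ) + a + 3) / 2) *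
      (Nat.factorial (n / 2) : ℝ) /
      (((n : ℝ) + a + 1) * Real.Gamma (((n : ℝ) + a + b + 2) / 2) * (poch ((a + 1) / 2) (n / 2)) ^ 2)
  else
    ((n : ℝ) + a + b + 1) * Real.Gamma (((n : ℝ) + b + 2) / 2) * Real.Gamma (((n : ℝ) + a + 2) / 2) *
      (Nat.factorial ((n - 1) / 2) : ℝ) /
      (2 * Real.Gamma (((n : ℝ) + a + b + 3) / 2) * (poch ((a + 1) / 2) ((n + 1) / 2)) ^ 2)

/-- Coupling factor `K_j(y; ν2, ν1; t, σ)`. -/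
def K (ν2 ν1 t σ : ℝ) (j : ℕ) (y : ℝ) : ℝ :=
  Real.sqrt (((y ^ 2 - t ^ 2) / 2) ^ j * ((y - t * σ) / (y - (-1 : ℝ) ^ j * t * σ)) *
    Real.Gamma (ν1 + 1/2) * Real.Gamma (ν2 + 1/2) /
    (Real.Gamma (ν1 + ν2 + j + 1) * hJ (2 * ν2) (2 * ν1) j))

/-- Dual −1 Hahn polynomials `R_n(x; η, ξ, N)`. -/
def Rdual (η ξ : ℝ) (N : ℕ) (n : ℕ) (x : ℝ) : ℝ :=
  if N % 2 = 0 then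
    if n % 2 = 0 then
      (16 : ℝ) ^ (n / 2) * poch (-(N : ℝ) / 2) (n / 2) * poch ((1 - 2 * η - N) / 2) (n / 2) *
        ∑ k ∈ Finset.range (n / 2 + 1),
          poch (-((n : ℝ) / 2)) k * poch (-(η + ξ + N) / 2 + (x + 1) / 4) k *
            poch (-(η + ξ + N) / 2 - (x + 1) / 4) k /
            (poch (-(N : ℝ) / 2) k * poch ((1 - 2 * η - N) / 2) k * (Nat.factorial k : ℝ))
    else
      (16 : ℝ) ^ (n / 2) * poch (1 - (N : ℝ) / 2) (n / 2) * poch ((1 - 2 * η - N) / 2) (n / 2) *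
        (x + 2 * η + 2 * ξ + 1) *
        ∑ k ∈ Finset.range (n / 2 + 1),
          poch (-(((n : ℝ) - 1) / 2)) k * poch (-(η + ξ + N) / 2 + (x + 1) / 4) k *
            poch (-(η + ξ + N) / 2 - (x + 1) / 4) k /
            (poch (1 - (N : ℝ) / 2) k * poch ((1 - 2 * η - N) / 2) k * (Nat.factorial k : ℝ))
  else
    if n % 2 = 0 then
      (16 : ℝ) ^ (n / 2) * poch ((1 - (N : ℝ)) / 2) (n / 2) * poch ((2 * ξ + 1) / 2) (n / 2) *
        ∑ k ∈ Finset.range (n / 2 + 1),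
          poch (-((n : ℝ) / 2)) k * poch ((η + ξ + 1) / 2 + (x + 1) / 4) k *
            poch ((η + ξ + 1) / 2 - (x + 1) / 4) k /
            (poch ((1 - (N : ℝ)) / 2) k * poch ((2 * ξ + 1) / 2) k * (Nat.factorial k : ℝ))
    else
      (16 : ℝ) ^ (n / 2) * poch ((1 - (N : ℝ)) / 2) (n / 2) * poch ((2 * ξ + 3) / 2) (n / 2) *
        (x + 2 * ξ - 2 * η + 1) *
        ∑ k ∈ Finset.range (n / 2 + 1),
          poch (-(((n : ℝ) - 1) / 2)) k * poch ((η + ξ + 1) / 2 + (x + 1) / 4) k *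
            poch ((η + ξ + 1) / 2 - (x + 1) / 4) k /
            (poch ((1 - (N : ℝ)) / 2) k * poch ((2 * ξ + 3) / 2) k * (Nat.factorial k : ℝ))

/-- Grid points `y_s` for the dual −1 Hahn polynomials. -/
def ygrid (η ξ : ℝ) (N : ℕ) (s : ℕ) : ℝ :=
  if N % 2 = 0 then (-1 : ℝ) ^ s * (2 * s - 2 * η - 2 * ξ - 2 * N - 1)
  else (-1 : ℝ) ^ s * (2 * s + 2 * η + 2 * ξ + 1)

/-- Weights `ϖ_s(η, ξ, N)` for the dual −1 Hahn polynomials. -/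
def varpi (η ξ : ℝ) (N : ℕ) (s : ℕ) : ℝ :=
  if N % 2 = 0 then
    if s % 2 = 0 then
      (-1 : ℝ) ^ (s / 2) * poch (-(N : ℝ) / 2) (s / 2) * poch (-(N : ℝ) / 2 - η + 1/2) (s / 2) *
        poch (-(N : ℝ) - η - ξ) (s / 2) /
        ((Nat.factorial (s / 2) : ℝ) * poch (-(N : ℝ) / 2 - ξ + 1/2) (s / 2) *
          poch (-(N : ℝ) / 2 - η - ξ) (s / 2))
    else
      (-1 : ℝ) ^ (s / 2) * poch (-(N : ℝ) / 2) (s / 2 + 1) * poch (-(N : ℝ) / 2 - η + 1/2) (s / 2) *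
        poch (-(N : ℝ) - η - ξ) (s / 2) /
        ((Nat.factorial (s / 2) : ℝ) * poch (-(N : ℝ) / 2 - ξ + 1/2) (s / 2) *
          poch (-(N : ℝ) / 2 - η - ξ) (s / 2 + 1))
  else
    if s % 2 = 0 then
      (-1 : ℝ) ^ (s / 2) * poch ((1 - (N : ℝ)) / 2) (s / 2) * poch (ξ + 1/2) (s / 2) *
        poch (η + ξ + 1) (s / 2) /
        ((Nat.factorial (s / 2) : ℝ) * poch (η + 1/2) (s / 2) *
          poch (((N : ℝ) + 3) / 2 + η + ξ) (s / 2))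
    else
      (-1 : ℝ) ^ (s / 2) * poch ((1 - (N : ℝ)) / 2) (s / 2) * poch (ξ + 1/2) (s / 2 + 1) *
        poch (η + ξ + 1) (s / 2) /
        ((Nat.factorial (s / 2) : ℝ) * poch (η + 1/2) (s / 2 + 1) *
          poch (((N : ℝ) + 3) / 2 + η + ξ) (s / 2))

/-- Normalizations `ν_n(η, ξ, N)` for the dual −1 Hahn polynomials. -/
def nuDual (η ξ : ℝ) (N : ℕ) (n : ℕ) : ℝ :=
  if N % 2 = 0 then
    if n % 2 = 0 then
      (16 : ℝ) ^ n * (Nat.factorial (n / 2) : ℝ) * poch (-(N : ℝ) / 2) (n / 2) *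
        poch (ξ + 1/2) (n / 2) * poch ((-(N : ℝ) - 2 * η + 1) / 2) (n / 2) *
        (poch (-(N : ℝ) - η - ξ) (N / 2) / poch ((-(N : ℝ) - 2 * ξ + 1) / 2) (N / 2))
    else
      -(16 : ℝ) ^ n * (Nat.factorial (n / 2) : ℝ) * poch (-(N : ℝ) / 2) (n / 2 + 1) *
        poch (ξ + 1/2) (n / 2 + 1) * poch ((-(N : ℝ) - 2 * η + 1) / 2) (n / 2) *
        (poch (-(N : ℝ) - η - ξ) (N / 2) / poch ((-(N : ℝ) - 2 * ξ + 1) / 2) (N / 2))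
  else
    if n % 2 = 0 then
      (16 : ℝ) ^ n * (Nat.factorial (n / 2) : ℝ) * poch ((1 - (N : ℝ)) / 2) (n / 2) *
        poch (ξ + 1/2) (n / 2) * poch (-(N : ℝ) / 2 - η) (n / 2) *
        (poch (η + ξ + 1) ((N + 1) / 2) / poch (η + 1/2) ((N + 1) / 2))
    else
      -(16 : ℝ) ^ n * (Nat.factorial (n / 2) : ℝ) * poch ((1 - (N : ℝ)) / 2) (n / 2) *
        poch (ξ + 1/2) (n / 2 + 1) * poch (-(N : ℝ) / 2 - η) (n / 2 + 1) *
        (poch (η + ξ + 1) ((N + 1) / 2) / poch (η + 1/2) ((N + 1) / 2))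

/-- The points `z_s = (-1)^{s+N+1} (2s + 2η + 2ξ + 1)`. -/
def zgrid (η ξ : ℝ) (N : ℕ) (s : ℕ) : ℝ :=
  (-1 : ℝ) ^ (s + N + 1) * (2 * s + 2 * η + 2 * ξ + 1)

/-- The reversed weights `ρ_s(η, ξ, N)`. -/
def rhoDual (η ξ : ℝ) (N : ℕ) (s : ℕ) : ℝ :=
  if N % 2 = 0 then varpi η ξ N (N - s) else varpi η ξ N s

/-- The quantity `ν_0(η, ξ, N)`. -/
def nu0 (η ξ : ℝ) (N : ℕ) : ℝ :=
  if N % 2 = 0 then poch (-(N : ℝ) - η - ξ) (N / 2) / poch ((-(N : ℝ) - 2 * ξ + 1) / 2) (N / 2)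
  else poch (η + ξ + 1) ((N + 1) / 2) / poch (η + 1/2) ((N + 1) / 2)

/-- Bannai–Ito recurrence coefficient `A_n`. -/
def BIA (ρ1 ρ2 r1 r2 : ℝ) (n : ℕ) : ℝ :=
  if n % 2 = 0 then
    ((n : ℝ) + 2 * ρ1 - 2 * r1 + 1) * ((n : ℝ) + 2 * ρ1 - 2 * r2 + 1) /
      (4 * ((n : ℝ) + (ρ1 + ρ2 - r1 - r2) + 1))
  else
    ((n : ℝ) + 2 * (ρ1 + ρ2 - r1 - r2) + 1) * ((n : ℝ) + 2 * ρ1 + 2 * ρ2 + 1) /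
      (4 * ((n : ℝ) + (ρ1 + ρ2 - r1 - r2) + 1))

/-- Bannai–Ito recurrence coefficient `C_n`. -/
def BIC (ρ1 ρ2 r1 r2 : ℝ) (n : ℕ) : ℝ :=
  if n % 2 = 0 then
    -((n : ℝ) * ((n : ℝ) - 2 * r1 - 2 * r2)) / (4 * ((n : ℝ) + (ρ1 + ρ2 - r1 - r2)))
  else
    -(((n : ℝ) + 2 * ρ2 - 2 * r2) * ((n : ℝ) + 2 * ρ2 - 2 * r1)) /
      (4 * ((n : ℝ) + (ρ1 + ρ2 - r1 - r2)))

/-- Monic Bannai–Ito polynomials, defined by the three-term recurrence. -/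
def BI (ρ1 ρ2 r1 r2 : ℝ) : ℕ → ℝ → ℝ
  | 0 => fun _ => 1
  | 1 => fun x => x - (ρ1 - BIA ρ1 ρ2 r1 r2 0 - BIC ρ1 ρ2 r1 r2 0)
  | (n + 2) => fun x =>
      (x - (ρ1 - BIA ρ1 ρ2 r1 r2 (n + 1) - BIC ρ1 ρ2 r1 r2 (n + 1))) * BI ρ1 ρ2 r1 r2 (n + 1) x
      - BIA ρ1 ρ2 r1 r2 n * BIC ρ1 ρ2 r1 r2 (n + 1) * BI ρ1 ρ2 r1 r2 n x

/-- Bannai–Ito normalization `η_n`. -/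
def BIeta (ρ1 ρ2 r1 r2 : ℝ) (n : ℕ) : ℝ :=
  (-1 : ℝ) ^ n * poch (ρ1 - r1 + 1/2) (n / 2 + n % 2) * poch (ρ2 - r1 + 1/2) (n / 2 + n % 2) *
    poch (1 - r1 - r2) (n / 2) /
    poch (((n / 2 : ℕ) : ℝ) + (ρ1 + ρ2 - r1 - r2) + 1) (n / 2 + n % 2)

/-- Bannai–Ito grid points `x_k`. -/
def BIx (ρ1 : ℝ) (k : ℕ) : ℝ := (-1 : ℝ) ^ k * ((k : ℝ) / 2 + ρ1 + 1/4) - 1/4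

/-- Bannai–Ito weights `w_k`. -/
def BIw (ρ1 ρ2 r1 r2 : ℝ) (k : ℕ) : ℝ :=
  ((-1 : ℝ) ^ k / (Nat.factorial (k / 2) : ℝ)) *
    (poch (ρ1 - r1 + 1/2) (k / 2 + k % 2) * poch (ρ1 - r2 + 1/2) (k / 2 + k % 2) *
      poch (ρ1 + ρ2 + 1) (k / 2) * poch (2 * ρ1 + 1) (k / 2)) /
    (poch (ρ1 + r1 + 1/2) (k / 2 + k % 2) * poch (ρ1 + r2 + 1/2) (k / 2 + k % 2) *
      poch (ρ1 - ρ2 + 1) (k / 2))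

/-- Bannai–Ito normalization `h_n` for even truncation parameter `N = 2 Ne`. -/
def BIhEven (ρ1 ρ2 r1 r2 : ℝ) (Ne : ℕ) (n : ℕ) : ℝ :=
  (Nat.factorial (n / 2) : ℝ) * (Nat.factorial Ne : ℝ) * poch (1 + 2 * ρ1) Ne *
    poch (1 + ρ1 + ρ2) (n / 2) *
    poch (1 + ((n / 2 : ℕ) : ℝ) + (ρ1 + ρ2 - r1 - r2)) (Ne - n / 2) *
    poch (1/2 + ρ1 - r1) (n / 2 + n % 2) * poch (1/2 + ρ2 - r1) (n / 2 + n % 2) /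
  ((Nat.factorial (Ne - n / 2 - n % 2) : ℝ) * poch (1/2 + ρ1 + r1) (Ne - n / 2) *
    poch (1/2 + ((n / 2 : ℕ) : ℝ) + ((n % 2 : ℕ) : ℝ) + ρ2 - r2) (Ne - n / 2 - n % 2) *
    (poch (1 + (n : ℝ) + (ρ1 + ρ2 - r1 - r2)) (n / 2 + n % 2)) ^ 2)

/-- Bannai–Ito normalization `h_n` for odd truncation parameter `N = 2 Ne + 1`. -/
def BIhOdd (ρ1 ρ2 r1 r2 : ℝ) (Ne : ℕ) (n : ℕ) : ℝ :=
  (Nat.factorial (n / 2) : ℝ) * (Nat.factorial Ne : ℝ) * poch (1 + 2 * ρ1) (Ne + 1) *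
    poch (1 - r1 - r2) (n / 2) *
    poch (1 + ((n / 2 : ℕ) : ℝ) + (ρ1 + ρ2 - r1 - r2)) (Ne + 1 - n / 2) *
    poch (1/2 + ρ1 - r1) (n / 2 + n % 2) * poch (1/2 + ρ1 - r2) (n / 2 + n % 2) /
  ((Nat.factorial (Ne - n / 2) : ℝ) * poch (1/2 + ρ1 + r1) (Ne + 1 - n / 2 - n % 2) *
    poch (1/2 + ((n / 2 : ℕ) : ℝ) + ((n % 2 : ℕ) : ℝ) + ρ2 - r2) (Ne + 1 - n / 2 - n % 2) *
    (poch (1 + (n : ℝ) + (ρ1 + ρ2 - r1 - r2)) (n / 2 + n % 2)) ^ 2)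

/-- Bannai–Ito normalization `h_n` with truncation parameter `N`. -/
def BIh (ρ1 ρ2 r1 r2 : ℝ) (N : ℕ) (n : ℕ) : ℝ :=
  if N % 2 = 0 then BIhEven ρ1 ρ2 r1 r2 (N / 2) n else BIhOdd ρ1 ρ2 r1 r2 (N / 2) n

/-- Phase `φ(n1, n2, j)` of the Clebsch–Gordan coefficients. -/
def cgPhi (n1 n2 j : ℕ) : ℕ := n1 * (n1 - 1) / 2 + j * (j + 1) / 2 + n1 * (n1 + n2 + 1)

/-- Clebsch–Gordan coefficients `C^{N,j}_{n1,n2}` of `osp(1|2)`. -/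
def CG (μ1 μ2 ε2 : ℝ) (n1 n2 j : ℕ) : ℝ :=
  (-1 : ℝ) ^ (cgPhi n1 n2 j) * (ε2 / 2) ^ n1 *
    Real.sqrt (mufact μ2 n2 * rhoDual μ2 μ1 (n1 + n2) j /
      (mufact μ1 n1 * mufact μ2 (n1 + n2) * nu0 μ2 μ1 (n1 + n2))) *
    Rdual μ2 μ1 (n1 + n2) n1 (zgrid μ2 μ1 (n1 + n2) j)

/-- Phase `φ` of the Racah coefficients. -/
def racahPhi (j12 j23 j123 : ℕ) : ℕ :=
  j123 * ((j12 - 1) * j12 / 2) + (j123 + 1) * (j23 + (j12 + 1) * j12 / 2)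

/-- Racah coefficients of `osp(1|2)` in terms of Bannai–Ito polynomials. -/
def racah (μ1 μ2 μ3 ε3 : ℝ) (j12 j23 j123 : ℕ) : ℝ :=
  (-1 : ℝ) ^ (racahPhi j12 j23 j123) * ε3 ^ j12 *
    Real.sqrt (BIw ((μ2 + μ3) / 2) ((μ1 + (-1 : ℝ) ^ j123 * (μ1 + μ2 + μ3 + 1 + j123)) / 2)
        ((μ3 - μ2) / 2) (((-1 : ℝ) ^ j123 * (μ1 + μ2 + μ3 + 1 + j123) - μ1) / 2) j23 /
      BIh ((μ2 + μ3) / 2) ((μ1 + (-1 : ℝ) ^ j123 * (μ1 + μ2 + μ3 + 1 + j123)) / 2)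
        ((μ3 - μ2) / 2) (((-1 : ℝ) ^ j123 * (μ1 + μ2 + μ3 + 1 + j123) - μ1) / 2) j123 j12) *
    BI ((μ2 + μ3) / 2) ((μ1 + (-1 : ℝ) ^ j123 * (μ1 + μ2 + μ3 + 1 + j123)) / 2)
      ((μ3 - μ2) / 2) (((-1 : ℝ) ^ j123 * (μ1 + μ2 + μ3 + 1 + j123) - μ1) / 2) j12
      (BIx ((μ2 + μ3) / 2) j23)

/-- The hypergeometric function `₀F₁(; b; x)`. -/
def hyp0F1 (b x : ℝ) : ℝ := ∑' k : ℕ, x ^ k / (poch b k * (Nat.factorial k : ℝ))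

/-- Truncated Gauss hypergeometric sum `₂F₁` (used for terminating series). -/
def hyp2F1fin (m : ℕ) (a1 a2 b x : ℝ) : ℝ :=
  ∑ k ∈ Finset.range m, poch a1 k * poch a2 k / (poch b k * (Nat.factorial k : ℝ)) * x ^ k

/-- The function `f_e(j)` appearing in the bilinear generating function. -/
def fe (μ1 μ2 ε2 z1 z2 : ℝ) (j : ℕ) : ℝ :=
  (-1 : ℝ) ^ (j / 2 + j % 2) * (z2 ^ j / Real.sqrt (mufact μ2 j)) *
    Real.sqrt (poch (1/2 + μ1) (j / 2 + j % 2) /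
      poch (((j / 2 : ℕ) : ℝ) + ((j % 2 : ℕ) : ℝ) + 1 + μ1 + μ2) (j / 2 + j % 2)) *
    (hyp2F1fin (j + 1) (-((j / 2 : ℕ) : ℝ)) (1/2 - ((j / 2 : ℕ) : ℝ) - ((j % 2 : ℕ) : ℝ) - μ2)
        (1/2 + μ1) (-(z1 / z2) ^ 2)
      + ((-1 : ℝ) ^ (j % 2) * z1 * ((j : ℝ) + 2 * μ2 * ((j % 2 : ℕ) : ℝ)) /
          (z2 * ε2 * (1 + 2 * μ1))) *
        hyp2F1fin (j + 1) (1 - ((j / 2 : ℕ) : ℝ) - ((j % 2 : ℕ) : ℝ)) (1/2 - ((j / 2 : ℕ) : ℝ) - μ2)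
          (3/2 + μ1) (-(z1 / z2) ^ 2))

/-- The function `f_o(j)` appearing in the bilinear generating function. -/
def fo (μ1 μ2 ε2 z1 z2 : ℝ) (j : ℕ) : ℝ :=
  (-1 : ℝ) ^ (j / 2 + j % 2) * (Real.sqrt ((z1 / z2) ^ 2 + 1))⁻¹ *
    (z2 ^ j / Real.sqrt (mufact μ2 j)) *
    Real.sqrt (poch (1/2 + μ1) (j / 2 + j % 2) /
      poch (((j / 2 : ℕ) : ℝ) + ((j % 2 : ℕ) : ℝ) + 1 + μ1 + μ2) (j / 2 + j % 2)) *
    (hyp2F1fin (j + 1) (-((j / 2 : ℕ) : ℝ) - ((j % 2 : ℕ) : ℝ)) (-1/2 - ((j / 2 : ℕ) : ℝ) - μ2)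
        (1/2 + μ1) (-(z1 / z2) ^ 2)
      + ((-1 : ℝ) ^ (j % 2) * z1 * ((j : ℝ) + 1 + 2 * μ1 + 2 * μ2 * ((j % 2 : ℕ) : ℝ)) /
          (z2 * ε2 * (1 + 2 * μ1))) *
        hyp2F1fin (j + 1) (-((j / 2 : ℕ) : ℝ)) (1/2 - ((j / 2 : ℕ) : ℝ) - ((j % 2 : ℕ) : ℝ) - μ2)
          (3/2 + μ1) (-(z1 / z2) ^ 2))

/-- Dunkl realization: `J₊`. -/
def Jp (f : ℝ → ℝ) : ℝ → ℝ := fun z => z * f z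

/-- Dunkl realization: `J₋` (the Dunkl derivative). -/
def Jm (μ : ℝ) (f : ℝ → ℝ) : ℝ → ℝ := fun z => deriv f z + (μ / z) * (f z - f (-z))

/-- Dunkl realization: `J₀`. -/
def J0op (μ : ℝ) (f : ℝ → ℝ) : ℝ → ℝ := fun z => z * deriv f z + (μ + 1/2) * f z

/-- Reflection operator `R`. -/
def Rop (f : ℝ → ℝ) : ℝ → ℝ := fun z => f (-z)

/- ===== Auxiliary lemmas ===== -/

lemma poch_zero (a : ℝ) : poch a 0 = 1 := by simp [poch]

lemma poch_succ (a : ℝ) (k : ℕ) : poch a (k + 1) = poch a k * (a + k) := by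
  simp [poch, Finset.prod_range_succ]

lemma poch_succ' (a : ℝ) (k : ℕ) : poch a (k + 1) = a * poch (a + 1) k := by
  induction k with
  | zero => simp [poch]
  | succ n ih =>
    rw [poch_succ, ih, poch_succ]
    push_cast; ring

lemma poch_pos {a : ℝ} (ha : 0 < a) (k : ℕ) : 0 < poch a k := by
  induction k with
  | zero => simp [poch_zero]
  | succ n ih =>
    rw [poch_succ]
    exact mul_pos ih (add_pos_of_pos_of_nonneg ha (Nat.cast_nonneg n))

lemma one_le_poch {a : ℝ} (ha : 1 ≤ a) (k : ℕ) : 1 ≤ poch a k := by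
  induction k with
  | zero => simp [poch_zero]
  | succ n ih =>
    rw [poch_succ]
    have h1 : (1:ℝ) ≤ a + n := le_add_of_le_of_nonneg ha (Nat.cast_nonneg n)
    nlinarith

lemma min_le_poch {a : ℝ} (ha : 0 < a) (k : ℕ) : min a 1 ≤ poch a k := by
  cases k with
  | zero => simpa [poch_zero] using min_le_right a 1
  | succ n =>
    rw [poch_succ']
    have h1 : (1:ℝ) ≤ poch (a + 1) n := one_le_poch (by linarith) n
    calc min a 1 ≤ a := min_le_left a 1
    _ ≤ a * poch (a + 1) n := le_mul_of_one_le_right ha.le h1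

lemma Gamma_add_nat_poch {b : ℝ} (hb : 0 < b) (m : ℕ) :
    Real.Gamma ((m : ℝ) + b) = poch b m * Real.Gamma b := by
  induction m with
  | zero => simp [poch_zero]
  | succ n ih =>
    have h : ((n + 1 : ℕ) : ℝ) + b = ((n : ℝ) + b) + 1 := by push_cast; ring
    have hne : ((n : ℝ) + b) ≠ 0 := by
      have : (0:ℝ) ≤ (n : ℝ) := Nat.cast_nonneg n
      linarith
    rw [h, Real.Gamma_add_one hne, ih, poch_succ]
    ring

lemma munum_even (μ : ℝ) (k : ℕ) : munum μ (2 * k) = 2 * k := by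
  have h : (-1 : ℝ) ^ (2 * k) = 1 := by rw [pow_mul]; norm_num
  rw [munum, h]; push_cast; ring

lemma munum_odd (μ : ℝ) (k : ℕ) : munum μ (2 * k + 1) = 2 * k + 1 + 2 * μ := by
  have h : (-1 : ℝ) ^ (2 * k + 1) = -1 := by rw [pow_succ, pow_mul]; norm_num
  rw [munum, h]; push_cast; ring

lemma mufact_succ (μ : ℝ) (n : ℕ) : mufact μ (n + 1) = mufact μ n * munum μ (n + 1) := by
  simp [mufact, Finset.prod_range_succ]

lemma mufact_even (μ : ℝ) (m : ℕ) :
    mufact μ (2 * m) = 4 ^ m * (Nat.factorial m : ℝ) * poch (μ + 1/2) m := by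
  induction m with
  | zero => simp [mufact, poch_zero]
  | succ n ih =>
    have h2 : 2 * (n + 1) = (2 * n + 1) + 1 := by ring
    rw [h2, mufact_succ, mufact_succ, ih]
    have e1 : munum μ (2 * n + 1) = 2 * n + 1 + 2 * μ := munum_odd μ n
    have e2 : munum μ ((2 * n + 1) + 1) = 2 * ((n : ℝ) + 1) := by
      have h3 : (2 * n + 1) + 1 = 2 * (n + 1) := by ring
      rw [h3, munum_even]
      push_cast; ring
    rw [e1, e2, poch_succ, Nat.factorial_succ]
    push_cast; ring

lemma mufact_odd (μ : ℝ) (m : ℕ) :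
    mufact μ (2 * m + 1)
      = (2 * μ + 1) * (4 ^ m * (Nat.factorial m : ℝ) * poch (μ + 3/2) m) := by
  rw [mufact_succ, mufact_even, munum_odd]
  have key : poch (μ + 1/2) m * ((μ + 1/2) + m) = (μ + 1/2) * poch (μ + 3/2) m := by
    have h1 := poch_succ (μ + 1/2) m
    have h2 := poch_succ' (μ + 1/2) m
    have h3 : μ + 1/2 + 1 = μ + 3/2 := by ring
    rw [h3] at h2
    linarith [h1, h2]
  linear_combination (2 * (4:ℝ) ^ m * (Nat.factorial m : ℝ)) * key

lemma poch_neg_nat (m : ℕ) : ∀ k, k ≤ m →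
    poch (-(m : ℝ)) k = (-1) ^ k * (Nat.factorial m : ℝ) / (Nat.factorial (m - k) : ℝ) := by
  intro k
  induction k with
  | zero =>
    intro _
    rw [poch_zero, pow_zero, one_mul, Nat.sub_zero,
      div_self (Nat.cast_ne_zero.2 (Nat.factorial_ne_zero m))]
  | succ n ih =>
    intro h
    have hn : n ≤ m := Nat.le_of_succ_le h
    rw [poch_succ, ih hn]
    obtain ⟨j, hj⟩ : ∃ j, m - (n + 1) = j := ⟨_, rfl⟩
    have hm : m = n + 1 + j := by omega
    have hsub : m - n = j + 1 := by omega
    have hcast : -(m : ℝ) + n = -((j : ℝ) + 1) := by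
      have hmr : (m : ℝ) = (n : ℝ) + 1 + (j : ℝ) := by exact_mod_cast hm
      rw [hmr]; ring
    rw [hcast, hsub, hj, Nat.factorial_succ]
    have h0 : ((Nat.factorial j : ℕ) : ℝ) ≠ 0 := Nat.cast_ne_zero.2 (Nat.factorial_ne_zero _)
    have h1 : ((j : ℕ) : ℝ) + 1 ≠ 0 := by positivity
    push_cast
    field_simp
    ring

lemma term_eq (b x t : ℝ) (hb : 0 < b) (m : ℕ) :
    t ^ m * laguerre (b - 1) m x / poch b m
      = ∑ k ∈ Finset.range (m + 1),
          ((-(x * t)) ^ k / (poch b k * (Nat.factorial k : ℝ)))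
            * (t ^ (m - k) / (Nat.factorial (m - k) : ℝ)) := by
  have hb1 : b - 1 + 1 = b := by ring
  rw [laguerre, hb1]
  rw [show t ^ m * (poch b m / (Nat.factorial m : ℝ) *
      ∑ k ∈ Finset.range (m + 1),
        poch (-(m : ℝ)) k / (poch b k * (Nat.factorial k : ℝ)) * x ^ k) / poch b m
    = ∑ k ∈ Finset.range (m + 1),
        t ^ m * (poch b m / (Nat.factorial m : ℝ) *
          (poch (-(m : ℝ)) k / (poch b k * (Nat.factorial k : ℝ)) * x ^ k)) / poch b m from by
    rw [Finset.mul_sum, Finset.mul_sum, Finset.sum_div]]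
  refine Finset.sum_congr rfl fun k hk => ?_
  have hkm : k ≤ m := Nat.lt_succ_iff.mp (Finset.mem_range.mp hk)
  rw [poch_neg_nat m k hkm]
  have ht : t ^ m = t ^ k * t ^ (m - k) := by
    rw [← pow_add, Nat.add_sub_cancel' hkm]
  have hneg : (-(x * t)) ^ k = (-1) ^ k * x ^ k * t ^ k := by
    rw [neg_pow, mul_pow]; ring
  rw [ht, hneg]
  have hpm : poch b m ≠ 0 := (poch_pos hb m).ne'
  have hpk : poch b k ≠ 0 := (poch_pos hb k).ne'
  have hfm : ((Nat.factorial m : ℕ) : ℝ) ≠ 0 := Nat.cast_ne_zero.2 (Nat.factorial_ne_zero _)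
  have hfk : ((Nat.factorial k : ℕ) : ℝ) ≠ 0 := Nat.cast_ne_zero.2 (Nat.factorial_ne_zero _)
  have hfmk : ((Nat.factorial (m - k) : ℕ) : ℝ) ≠ 0 := Nat.cast_ne_zero.2 (Nat.factorial_ne_zero _)
  field_simp

lemma gen (b x t : ℝ) (hb : 0 < b) :
    (Summable fun m : ℕ => |t ^ m * laguerre (b - 1) m x / poch b m|) ∧
      ∑' m : ℕ, t ^ m * laguerre (b - 1) m x / poch b m
        = Real.exp t * hyp0F1 b (-(x * t)) := by
  set f : ℕ → ℝ := fun k => (-(x * t)) ^ k / (poch b k * (Nat.factorial k : ℝ)) with hfdef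
  set g : ℕ → ℝ := fun j => t ^ j / (Nat.factorial j : ℝ) with hgdef
  have hc : (0:ℝ) < min b 1 := lt_min hb one_pos
  have hg : Summable fun j => ‖g j‖ := by
    refine (Real.summable_pow_div_factorial |t|).congr fun j => ?_
    simp [hgdef, abs_div, abs_pow, Real.norm_eq_abs]
  have hf : Summable fun k => ‖f k‖ := by
    refine Summable.of_nonneg_of_le (fun k => norm_nonneg _) (fun k => ?_)
      ((Real.summable_pow_div_factorial |x * t|).mul_left (min b 1)⁻¹)
    have hp := poch_pos hb k
    have hk : (0:ℝ) < (Nat.factorial k : ℝ) := by exact_mod_cast Nat.factorial_pos k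
    have h1 : ‖f k‖ = |x * t| ^ k / (poch b k * (Nat.factorial k : ℝ)) := by
      rw [hfdef]
      rw [Real.norm_eq_abs, abs_div, abs_pow, abs_neg, abs_of_pos (mul_pos hp hk)]
    rw [h1]
    have h2 : |x * t| ^ k / (poch b k * (Nat.factorial k : ℝ))
        ≤ |x * t| ^ k / (min b 1 * (Nat.factorial k : ℝ)) :=
      div_le_div_of_nonneg_left (pow_nonneg (abs_nonneg _) k) (mul_pos hc hk)
        (mul_le_mul_of_nonneg_right (min_le_poch hb k) hk.le)
    refine h2.trans (le_of_eq ?_)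
    have : (min b 1)⁻¹ * (|x * t| ^ k / (Nat.factorial k : ℝ))
        = |x * t| ^ k / (min b 1 * (Nat.factorial k : ℝ)) := by
      field_simp
    rw [this]
  have heq : ∀ m : ℕ, t ^ m * laguerre (b - 1) m x / poch b m
      = ∑ k ∈ Finset.range (m + 1), f k * g (m - k) := fun m => term_eq b x t hb m
  have hsum := summable_norm_sum_mul_range_of_summable_norm hf hg
  constructor
  · refine hsum.congr fun m => ?_
    rw [Real.norm_eq_abs, ← heq m]
  · have hmul := tsum_mul_tsum_eq_tsum_sum_range_of_summable_norm hf hg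
    have hft : ∑' k, f k = hyp0F1 b (-(x * t)) := rfl
    have hgt : ∑' j, g j = Real.exp t := by
      rw [Real.exp_eq_exp_ℝ, NormedSpace.exp_eq_tsum_div]
    calc ∑' m : ℕ, t ^ m * laguerre (b - 1) m x / poch b m
        = ∑' m : ℕ, ∑ k ∈ Finset.range (m + 1), f k * g (m - k) := tsum_congr heq
      _ = (∑' k, f k) * ∑' j, g j := hmul.symm
      _ = Real.exp t * hyp0F1 b (-(x * t)) := by rw [hft, hgt]; ring

lemma even_term (μ γ lam z : ℝ) (hμ : 0 < μ) (m : ℕ) :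
    P μ γ (2 * m) lam * z ^ (2 * m) / Real.sqrt (mufact μ (2 * m))
      = (-z ^ 2 / 2) ^ m * laguerre ((μ + 1/2) - 1) m ((lam ^ 2 - γ ^ 2) / 2)
          / poch (μ + 1/2) m := by
  have hb : (0:ℝ) < μ + 1/2 := by linarith
  have hm0 : (2 * m) % 2 = 0 := Nat.mul_mod_right 2 m
  have hm2 : (2 * m) / 2 = m := by omega
  have hα : (μ + 1/2) - 1 = μ - 1/2 := by ring
  have hΓ : Real.Gamma ((m : ℝ) + μ + 1/2) = poch (μ + 1/2) m * Real.Gamma (μ + 1/2) := by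
    rw [show (m : ℝ) + μ + 1/2 = (m : ℝ) + (μ + 1/2) by ring, Gamma_add_nat_poch hb]
  have hp := poch_pos hb m
  have hΓpos := Real.Gamma_pos_of_pos hb
  have hfac : (0:ℝ) < (Nat.factorial m : ℝ) := by exact_mod_cast Nat.factorial_pos m
  have hsq : Real.sqrt ((Nat.factorial m : ℝ) * Real.Gamma (μ + 1/2)
        / Real.Gamma ((m : ℝ) + μ + 1/2))
      = Real.sqrt (Nat.factorial m) / Real.sqrt (poch (μ + 1/2) m) := by
    rw [hΓ, mul_div_mul_right _ _ hΓpos.ne']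
    exact Real.sqrt_div hfac.le _
  have h4 : Real.sqrt ((4:ℝ) ^ m) = 2 ^ m := by
    have h42 : ((2:ℝ) ^ m) ^ 2 = 4 ^ m := by
      rw [← pow_mul, mul_comm, pow_mul]; norm_num
    rw [← h42, Real.sqrt_sq (by positivity)]
  have hmf : Real.sqrt (mufact μ (2 * m))
      = 2 ^ m * (Real.sqrt (Nat.factorial m) * Real.sqrt (poch (μ + 1/2) m)) := by
    rw [mufact_even, Real.sqrt_mul (by positivity), Real.sqrt_mul (by positivity), h4]
    ring
  have hz : (-z ^ 2 / 2) ^ m = ((-1) ^ m * z ^ (2 * m)) / 2 ^ m := by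
    rw [div_pow, neg_pow, pow_mul]
  have hss : Real.sqrt (poch (μ + 1/2) m) * Real.sqrt (poch (μ + 1/2) m)
      = poch (μ + 1/2) m := Real.mul_self_sqrt hp.le
  have hs1 : Real.sqrt ((Nat.factorial m : ℝ)) ≠ 0 :=
    (Real.sqrt_pos.2 hfac).ne'
  have hs2 : Real.sqrt (poch (μ + 1/2) m) ≠ 0 := (Real.sqrt_pos.2 hp).ne'
  simp only [P, hm0, hm2, if_pos, hα]
  rw [hsq, hmf, hz]
  generalize hg2 : Real.sqrt (poch (μ + 1/2) m) = s2 at hss hs2 ⊢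
  generalize hg1 : Real.sqrt ((Nat.factorial m : ℝ)) = s1 at hs1 ⊢
  rw [← hss]
  have hpne : poch (μ + 1/2) m ≠ 0 := hp.ne'
  field_simp

lemma odd_term (μ γ lam z : ℝ) (hμ : 0 < μ) (m : ℕ) :
    P μ γ (2 * m + 1) lam * z ^ (2 * m + 1) / Real.sqrt (mufact μ (2 * m + 1))
      = (z * (lam - γ) / (2 * μ + 1)) *
          ((-z ^ 2 / 2) ^ m * laguerre ((μ + 3/2) - 1) m ((lam ^ 2 - γ ^ 2) / 2)
            / poch (μ + 3/2) m) := by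
  have hb : (0:ℝ) < μ + 3/2 := by linarith
  have h2μ : (0:ℝ) < 2 * μ + 1 := by linarith
  have hm0 : (2 * m + 1) % 2 = 1 := by omega
  have hm2 : (2 * m + 1) / 2 = m := by omega
  have hα : (μ + 3/2) - 1 = μ + 1/2 := by ring
  have hΓ : Real.Gamma ((m : ℝ) + μ + 3/2) = poch (μ + 3/2) m * Real.Gamma (μ + 3/2) := by
    rw [show (m : ℝ) + μ + 3/2 = (m : ℝ) + (μ + 3/2) by ring, Gamma_add_nat_poch hb]
  have hp := poch_pos hb m
  have hΓpos := Real.Gamma_pos_of_pos hb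
  have hfac : (0:ℝ) < (Nat.factorial m : ℝ) := by exact_mod_cast Nat.factorial_pos m
  have hsq : Real.sqrt ((Nat.factorial m : ℝ) * Real.Gamma (μ + 3/2)
        / Real.Gamma ((m : ℝ) + μ + 3/2))
      = Real.sqrt (Nat.factorial m) / Real.sqrt (poch (μ + 3/2) m) := by
    rw [hΓ, mul_div_mul_right _ _ hΓpos.ne']
    exact Real.sqrt_div hfac.le _
  have h4 : Real.sqrt ((4:ℝ) ^ m) = 2 ^ m := by
    have h42 : ((2:ℝ) ^ m) ^ 2 = 4 ^ m := by
      rw [← pow_mul, mul_comm, pow_mul]; norm_num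
    rw [← h42, Real.sqrt_sq (by positivity)]
  have hmf : Real.sqrt (mufact μ (2 * m + 1))
      = Real.sqrt (2 * μ + 1) *
          (2 ^ m * (Real.sqrt (Nat.factorial m) * Real.sqrt (poch (μ + 3/2) m))) := by
    rw [mufact_odd, Real.sqrt_mul h2μ.le, Real.sqrt_mul (by positivity),
      Real.sqrt_mul (by positivity), h4]
    ring
  have hz : (-z ^ 2 / 2) ^ m = ((-1) ^ m * z ^ (2 * m)) / 2 ^ m := by
    rw [div_pow, neg_pow, pow_mul]
  have hss : Real.sqrt (poch (μ + 3/2) m) * Real.sqrt (poch (μ + 3/2) m)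
      = poch (μ + 3/2) m := Real.mul_self_sqrt hp.le
  have hs0s : Real.sqrt (2 * μ + 1) * Real.sqrt (2 * μ + 1) = 2 * μ + 1 :=
    Real.mul_self_sqrt h2μ.le
  have hs1 : Real.sqrt ((Nat.factorial m : ℝ)) ≠ 0 :=
    (Real.sqrt_pos.2 hfac).ne'
  have hs2 : Real.sqrt (poch (μ + 3/2) m) ≠ 0 := (Real.sqrt_pos.2 hp).ne'
  have hs0 : Real.sqrt (2 * μ + 1) ≠ 0 := (Real.sqrt_pos.2 h2μ).ne'
  have hzp : z ^ (2 * m + 1) = z * z ^ (2 * m) := by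
    rw [pow_succ]; ring
  simp only [P, hm0, hm2, hα]
  rw [if_neg (by norm_num), hsq, hmf, hz, hzp]
  generalize hg2 : Real.sqrt (poch (μ + 3/2) m) = s2 at hss hs2 ⊢
  generalize hg0 : Real.sqrt (2 * μ + 1) = s0 at hs0s hs0 ⊢
  generalize hg1 : Real.sqrt ((Nat.factorial m : ℝ)) = s1 at hs1 ⊢
  rw [← hss, ← hs0s]
  field_simp

set_option maxHeartbeats 1000000 in
/-- generating function for the Specialized Chihara polynomials. -/
theorem chihara_generating_function (μ γ lam z : ℝ) (hμ : 0 < μ) :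
    Summable (fun n : ℕ => |P μ γ n lam * z ^ n / Real.sqrt (mufact μ n)|) ∧
    ∑' n : ℕ, P μ γ n lam * z ^ n / Real.sqrt (mufact μ n)
      = Real.exp (-z ^ 2 / 2) *
        (hyp0F1 (μ + 1/2) (z ^ 2 * (lam ^ 2 - γ ^ 2) / 4)
          + (z * (lam - γ) / (2 * μ + 1)) * hyp0F1 (μ + 3/2) (z ^ 2 * (lam ^ 2 - γ ^ 2) / 4)) := by
  have hu : -((lam ^ 2 - γ ^ 2) / 2 * (-z ^ 2 / 2)) = z ^ 2 * (lam ^ 2 - γ ^ 2) / 4 := by ring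
  have g1 := gen (μ + 1/2) ((lam ^ 2 - γ ^ 2) / 2) (-z ^ 2 / 2) (by linarith)
  have g2 := gen (μ + 3/2) ((lam ^ 2 - γ ^ 2) / 2) (-z ^ 2 / 2) (by linarith)
  rw [hu] at g1 g2
  have he := even_term μ γ lam z hμ
  have ho := odd_term μ γ lam z hμ
  have hse : Summable fun m : ℕ =>
      |P μ γ (2 * m) lam * z ^ (2 * m) / Real.sqrt (mufact μ (2 * m))| :=
    g1.1.congr fun m => by rw [he m]
  have hso : Summable fun m : ℕ =>
      |P μ γ (2 * m + 1) lam * z ^ (2 * m + 1) / Real.sqrt (mufact μ (2 * m + 1))| :=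
    (g2.1.mul_left |z * (lam - γ) / (2 * μ + 1)|).congr fun m => by
      rw [ho m, abs_mul]
  constructor
  · exact Summable.even_add_odd hse hso
  · have hseven : ∑' m : ℕ, P μ γ (2 * m) lam * z ^ (2 * m) / Real.sqrt (mufact μ (2 * m))
        = Real.exp (-z ^ 2 / 2) * hyp0F1 (μ + 1/2) (z ^ 2 * (lam ^ 2 - γ ^ 2) / 4) := by
      rw [tsum_congr he, g1.2]
    have hsodd : ∑' m : ℕ,
          P μ γ (2 * m + 1) lam * z ^ (2 * m + 1) / Real.sqrt (mufact μ (2 * m + 1))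
        = (z * (lam - γ) / (2 * μ + 1)) *
            (Real.exp (-z ^ 2 / 2) * hyp0F1 (μ + 3/2) (z ^ 2 * (lam ^ 2 - γ ^ 2) / 4)) := by
      rw [tsum_congr ho]
      rw [tsum_mul_left]
      rw [g2.2]
    have hse' : Summable fun m : ℕ =>
        P μ γ (2 * m) lam * z ^ (2 * m) / Real.sqrt (mufact μ (2 * m)) := hse.of_abs
    have hso' : Summable fun m : ℕ =>
        P μ γ (2 * m + 1) lam * z ^ (2 * m + 1) / Real.sqrt (mufact μ (2 * m + 1)) := hso.of_abs
    rw [← tsum_even_add_odd (f := fun n : ℕ =>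
      P μ γ n lam * z ^ n / Real.sqrt (mufact μ n)) hse' hso', hseven, hsodd]
    ring

end MinusOne
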